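/- Let k > 0 be real and let a, b, c, d, z be complex numbers with a + b = c + d. Suppose that for every integer l ≥ 1 none of the eight numbers kl+a−z, kl+b−z, kl+c−z, kl+d−z, kl+a+z, kl+b+z, kl+c+z, kl+d+z is a nonpositive integer. Then the infinite product over l = 1, 2, 3, … of the terms [Γ(kl+a−z)Γ(kl+b−z)Γ(kl+c+z)Γ(kl+d+z)] / [Γ(kl+c−z)Γ(kl+d−z)Γ(kl+a+z)Γ(kl+b+z)] converges (the family of factors is multipliable) to a nonzero complex number. -/

import Mathlib

open Complex Real Filter Topology

/-- The generic factor of the doubly reflected infinite Gamma product: the block of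
four Gamma ratios together with the same block with `z` replaced by `-z`. -/
noncomputable def gammaFactor (k : ℝ) (a b c d z : ℂ) (l : ℕ) : ℂ :=
  (Complex.Gamma ((k : ℂ) * l + a - z) * Complex.Gamma ((k : ℂ) * l + b - z) *
   Complex.Gamma ((k : ℂ) * l + c + z) * Complex.Gamma ((k : ℂ) * l + d + z)) /
  (Complex.Gamma ((k : ℂ) * l + c - z) * Complex.Gamma ((k : ℂ) * l + d - z) *
   Complex.Gamma ((k : ℂ) * l + a + z) * Complex.Gamma ((k : ℂ) * l + b + z))


open Complex Real Filter Topology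

lemma norm_prod_le_exp {ι : Type*} (s : Finset ι) (f : ι → ℂ) :
    ‖∏ i ∈ s, f i‖ ≤ Real.exp (∑ i ∈ s, ‖f i - 1‖) := by
  calc ‖∏ i ∈ s, f i‖ ≤ ∏ i ∈ s, ‖f i‖ := by rw [norm_prod]
    _ ≤ ∏ i ∈ s, Real.exp ‖f i - 1‖ := by
        refine Finset.prod_le_prod (fun i _ => norm_nonneg _) (fun i _ => ?_)
        calc ‖f i‖ = ‖1 + (f i - 1)‖ := by ring_nf
          _ ≤ 1 + ‖f i - 1‖ := (norm_add_le _ _).trans (by simp)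
          _ ≤ Real.exp ‖f i - 1‖ := by
              simpa [add_comm] using Real.add_one_le_exp ‖f i - 1‖
    _ = Real.exp (∑ i ∈ s, ‖f i - 1‖) := (Real.exp_sum s _).symm

lemma norm_prod_sub_one_le {ι : Type*} (s : Finset ι) (f : ι → ℂ) :
    ‖(∏ i ∈ s, f i) - 1‖ ≤ Real.exp (∑ i ∈ s, ‖f i - 1‖) - 1 := by
  induction s using Finset.cons_induction with
  | empty => simp
  | cons a s ha ih =>
    rw [Finset.prod_cons, Finset.sum_cons]
    calc ‖f a * ∏ i ∈ s, f i - 1‖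
        = ‖(f a - 1) * ∏ i ∈ s, f i + ((∏ i ∈ s, f i) - 1)‖ := by ring_nf
      _ ≤ ‖f a - 1‖ * ‖∏ i ∈ s, f i‖ + ‖(∏ i ∈ s, f i) - 1‖ := by
          refine (norm_add_le _ _).trans ?_
          simp [norm_mul]
      _ ≤ ‖f a - 1‖ * Real.exp (∑ i ∈ s, ‖f i - 1‖)
            + (Real.exp (∑ i ∈ s, ‖f i - 1‖) - 1) := by
          gcongr
          · exact norm_prod_le_exp s f
      _ ≤ Real.exp ‖f a - 1‖ * Real.exp (∑ i ∈ s, ‖f i - 1‖) - 1 := by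
          have h1 : ‖f a - 1‖ + 1 ≤ Real.exp ‖f a - 1‖ := by
            simpa [add_comm] using Real.add_one_le_exp ‖f a - 1‖
          have h2 : (0:ℝ) < Real.exp (∑ i ∈ s, ‖f i - 1‖) := Real.exp_pos _
          nlinarith
      _ = Real.exp (‖f a - 1‖ + ∑ i ∈ s, ‖f i - 1‖) - 1 := by rw [Real.exp_add]

lemma telescope_sum_le (x : ℝ) (hx : 2 ≤ x) (n : ℕ) :
    ∑ j ∈ Finset.range n, 1 / (x + j) ^ 3 ≤ 2 / x ^ 2 := by
  have hx1 : (1:ℝ) ≤ x - 1 := by linarith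
  have key : ∀ j : ℕ, 1 / (x + j) ^ 3 ≤
      (1 / x) * (1 / (x - 1 + j) - 1 / (x - 1 + (j + 1 : ℕ))) := by
    intro j
    have hj : (0:ℝ) ≤ (j:ℝ) := Nat.cast_nonneg j
    have h1 : (0:ℝ) < x - 1 + j := by linarith
    have h2 : (0:ℝ) < x + j := by linarith
    have h3 : (1:ℝ) / (x - 1 + j) - 1 / (x - 1 + (j + 1 : ℕ)) =
        1 / ((x - 1 + j) * (x + j)) := by
      push_cast
      rw [div_sub_div _ _ (ne_of_gt h1) (by positivity)]
      congr 1 <;> ring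
    rw [h3, div_mul_div_comm, one_mul]
    apply one_div_le_one_div_of_le (by positivity)
    have e1 : x * ((x - 1 + (j:ℝ)) * (x + j)) ≤ (x + j) * ((x + j) * (x + j)) := by
      gcongr <;> linarith
    calc x * ((x - 1 + (j:ℝ)) * (x + j)) ≤ (x + j) * ((x + j) * (x + j)) := e1
      _ = (x + j) ^ 3 := by ring
  calc ∑ j ∈ Finset.range n, 1 / (x + j) ^ 3
      ≤ ∑ j ∈ Finset.range n, (1 / x) * (1 / (x - 1 + j) - 1 / (x - 1 + (j + 1 : ℕ))) :=
        Finset.sum_le_sum (fun j _ => key j)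
    _ = (1 / x) * ∑ j ∈ Finset.range n, (1 / (x - 1 + j) - 1 / (x - 1 + (j + 1 : ℕ))) := by
        rw [Finset.mul_sum]
    _ = (1 / x) * (1 / (x - 1 + (0:ℕ)) - 1 / (x - 1 + n)) := by
        rw [Finset.sum_range_sub' (fun j : ℕ => 1 / (x - 1 + j))]
    _ ≤ 2 / x ^ 2 := by
        have h4 : (0:ℝ) < x - 1 + n := by have := Nat.cast_nonneg (α := ℝ) n; linarith
        have h5 : 1 / (x - 1 + (0:ℕ)) - 1 / (x - 1 + n) ≤ 1 / (x - 1) := by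
          simp only [Nat.cast_zero, add_zero]
          have : 0 ≤ 1 / (x - 1 + n) := by positivity
          linarith
        have h6 : (1:ℝ) / (x - 1) ≤ 2 / x := by
          rw [div_le_div_iff₀ (by linarith) (by linarith)]; linarith
        calc (1 / x) * (1 / (x - 1 + (0:ℕ)) - 1 / (x - 1 + n))
            ≤ (1 / x) * (2 / x) := by
              apply mul_le_mul_of_nonneg_left (h5.trans h6) (by positivity)
          _ = 2 / x ^ 2 := by ring


noncomputable def Cq (a b c d z : ℂ) : ℝ :=
  16 * (‖4*z*(c*d - a*b)‖ + ‖(c-z)*(d-z)*(a+z)*(b+z) - (a-z)*(b-z)*(c+z)*(d+z)‖)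

noncomputable def Kq (a b c d z : ℂ) : ℝ := 2 * Cq a b c d z * Real.exp (Cq a b c d z)

lemma Cq_nonneg (a b c d z : ℂ) : 0 ≤ Cq a b c d z := by
  unfold Cq; positivity

lemma ND_identity (a b c d z : ℂ) (habcd : a + b = c + d) (w : ℂ) :
    (w+(c-z))*(w+(d-z))*(w+(a+z))*(w+(b+z)) - (w+(a-z))*(w+(b-z))*(w+(c+z))*(w+(d+z))
      = 4*z*(c*d - a*b) * w + ((c-z)*(d-z)*(a+z)*(b+z) - (a-z)*(b-z)*(c+z)*(d+z)) := by
  have hd : d = a + b - c := by linear_combination -habcd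
  subst hd; ring

lemma norm_D_lower (u1 u2 u3 u4 : ℂ) (M w : ℝ)
    (h1 : ‖u1‖ ≤ M) (h2 : ‖u2‖ ≤ M) (h3 : ‖u3‖ ≤ M) (h4 : ‖u4‖ ≤ M)
    (hw : 2*M + 2 ≤ w) (hM : 0 ≤ M) :
    (w/2)^4 ≤ ‖((w:ℂ)+u1)*((w:ℂ)+u2)*((w:ℂ)+u3)*((w:ℂ)+u4)‖ := by
  have hw0 : 0 < w := by linarith
  have key : ∀ u : ℂ, ‖u‖ ≤ M → w/2 ≤ ‖(w:ℂ)+u‖ := by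
    intro u hu
    have h : ‖(w:ℂ)‖ ≤ ‖(w:ℂ)+u‖ + ‖u‖ := by
      calc ‖(w:ℂ)‖ = ‖((w:ℂ)+u) - u‖ := by ring_nf
        _ ≤ ‖(w:ℂ)+u‖ + ‖u‖ := norm_sub_le _ _
    have hnw : ‖(w:ℂ)‖ = w := by
      rw [Complex.norm_real]; exact abs_of_pos hw0
    linarith
  rw [norm_mul, norm_mul, norm_mul]
  have k1 := key u1 h1; have k2 := key u2 h2; have k3 := key u3 h3; have k4 := key u4 h4
  have hw2 : (0:ℝ) ≤ w/2 := by linarith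
  calc (w/2)^4 = (w/2)*(w/2)*(w/2)*(w/2) := by ring
    _ ≤ ‖(w:ℂ)+u1‖*‖(w:ℂ)+u2‖*‖(w:ℂ)+u3‖*‖(w:ℂ)+u4‖ := by
        apply mul_le_mul (mul_le_mul (mul_le_mul k1 k2 hw2 (by positivity)) k3 hw2
          (by positivity)) k4 hw2 (by positivity)

lemma exp_sub_one_le_mul_exp {t : ℝ} (ht : 0 ≤ t) : Real.exp t - 1 ≤ t * Real.exp t := by
  have h := Real.add_one_le_exp (-t)
  have h2 : 0 < Real.exp t := Real.exp_pos t
  have h3 : Real.exp (-t) = (Real.exp t)⁻¹ := Real.exp_neg t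
  rw [h3] at h
  have h4 : (1 - t) * Real.exp t ≤ 1 := by
    calc (1 - t) * Real.exp t = (-t + 1) * Real.exp t := by ring
      _ ≤ (Real.exp t)⁻¹ * Real.exp t := by apply mul_le_mul_of_nonneg_right h (le_of_lt h2)
      _ = 1 := inv_mul_cancel₀ (ne_of_gt h2)
  nlinarith

set_option maxHeartbeats 2000000 in
lemma gamma_ratio_bound (a b c d z : ℂ) (habcd : a + b = c + d) (M : ℝ)
    (h1 : ‖a-z‖ ≤ M) (h2 : ‖b-z‖ ≤ M) (h3 : ‖c-z‖ ≤ M) (h4 : ‖d-z‖ ≤ M)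
    (h5 : ‖a+z‖ ≤ M) (h6 : ‖b+z‖ ≤ M) (h7 : ‖c+z‖ ≤ M) (h8 : ‖d+z‖ ≤ M)
    (hM : 0 ≤ M) (x : ℝ) (hx : 2*M + 2 ≤ x) :
    ‖(Complex.Gamma ((x:ℂ)+(a-z)) * Complex.Gamma ((x:ℂ)+(b-z)) *
      Complex.Gamma ((x:ℂ)+(c+z)) * Complex.Gamma ((x:ℂ)+(d+z))) /
     (Complex.Gamma ((x:ℂ)+(c-z)) * Complex.Gamma ((x:ℂ)+(d-z)) *
      Complex.Gamma ((x:ℂ)+(a+z)) * Complex.Gamma ((x:ℂ)+(b+z))) - 1‖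
      ≤ Kq a b c d z / x^2 := by
  have hx2 : (2:ℝ) ≤ x := by linarith
  have hx0 : (0:ℝ) < x := by linarith
  -- real parts are positive
  have hre : ∀ u : ℂ, ‖u‖ ≤ M → ∀ j : ℕ, 0 < ((x:ℂ) + u + (j:ℂ)).re := by
    intro u hu j
    have habs : |u.re| ≤ ‖u‖ := Complex.abs_re_le_norm u
    have hj : (0:ℝ) ≤ (j:ℝ) := Nat.cast_nonneg j
    simp only [Complex.add_re, Complex.ofReal_re, Complex.natCast_re]
    have : -M ≤ u.re := by cases abs_le.mp (habs.trans hu); linarith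
    linarith
  have hne : ∀ u : ℂ, ‖u‖ ≤ M → ∀ j : ℕ, (x:ℂ) + u + (j:ℂ) ≠ 0 := by
    intro u hu j h0
    have := hre u hu j
    rw [h0] at this; simp at this
  -- the elementary factors
  set α : ℂ := 4*z*(c*d - a*b) with hα
  set β : ℂ := (c-z)*(d-z)*(a+z)*(b+z) - (a-z)*(b-z)*(c+z)*(d+z) with hβ
  set P : ℕ → ℂ := fun j =>
    (((x:ℂ)+(c-z)+j)*((x:ℂ)+(d-z)+j)*((x:ℂ)+(a+z)+j)*((x:ℂ)+(b+z)+j)) /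
    (((x:ℂ)+(a-z)+j)*((x:ℂ)+(b-z)+j)*((x:ℂ)+(c+z)+j)*((x:ℂ)+(d+z)+j)) with hP
  -- per-factor bound
  have hPb : ∀ j : ℕ, ‖P j - 1‖ ≤ Cq a b c d z * (1 / (x + (j:ℝ))^3) := by
    intro j
    have hj : (0:ℝ) ≤ (j:ℝ) := Nat.cast_nonneg j
    set w : ℝ := x + (j:ℝ) with hw
    have hwx : 2*M + 2 ≤ w := by simp only [hw]; linarith
    have hw1 : (1:ℝ) ≤ w := by linarith
    have hw0 : (0:ℝ) < w := by linarith
    have hden_eq : ((x:ℂ)+(a-z)+j)*((x:ℂ)+(b-z)+j)*((x:ℂ)+(c+z)+j)*((x:ℂ)+(d+z)+j)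
        = ((w:ℂ)+(a-z))*((w:ℂ)+(b-z))*((w:ℂ)+(c+z))*((w:ℂ)+(d+z)) := by
      simp only [hw]; push_cast; ring
    have hnum_eq : ((x:ℂ)+(c-z)+j)*((x:ℂ)+(d-z)+j)*((x:ℂ)+(a+z)+j)*((x:ℂ)+(b+z)+j)
        = ((w:ℂ)+(c-z))*((w:ℂ)+(d-z))*((w:ℂ)+(a+z))*((w:ℂ)+(b+z)) := by
      simp only [hw]; push_cast; ring
    have hdlow : (w/2)^4 ≤ ‖((x:ℂ)+(a-z)+j)*((x:ℂ)+(b-z)+j)*((x:ℂ)+(c+z)+j)*((x:ℂ)+(d+z)+j)‖ := by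
      rw [hden_eq]; exact norm_D_lower _ _ _ _ M w h1 h2 h7 h8 hwx hM
    have hd4 : (0:ℝ) < (w/2)^4 := by positivity
    have hden_ne : ((x:ℂ)+(a-z)+j)*((x:ℂ)+(b-z)+j)*((x:ℂ)+(c+z)+j)*((x:ℂ)+(d+z)+j) ≠ 0 := by
      intro h0; rw [h0, norm_zero] at hdlow; linarith
    have hsub : P j - 1 =
        (((x:ℂ)+(c-z)+j)*((x:ℂ)+(d-z)+j)*((x:ℂ)+(a+z)+j)*((x:ℂ)+(b+z)+j) -
         ((x:ℂ)+(a-z)+j)*((x:ℂ)+(b-z)+j)*((x:ℂ)+(c+z)+j)*((x:ℂ)+(d+z)+j)) /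
        (((x:ℂ)+(a-z)+j)*((x:ℂ)+(b-z)+j)*((x:ℂ)+(c+z)+j)*((x:ℂ)+(d+z)+j)) := by
      rw [hP]; rw [div_sub_one hden_ne]
    have hnd : ((x:ℂ)+(c-z)+j)*((x:ℂ)+(d-z)+j)*((x:ℂ)+(a+z)+j)*((x:ℂ)+(b+z)+j) -
         ((x:ℂ)+(a-z)+j)*((x:ℂ)+(b-z)+j)*((x:ℂ)+(c+z)+j)*((x:ℂ)+(d+z)+j)
         = α * (w:ℂ) + β := by
      rw [hnum_eq, hden_eq]; exact ND_identity a b c d z habcd (w:ℂ)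
    have hnw : ‖(w:ℂ)‖ = w := by rw [Complex.norm_real]; exact abs_of_pos hw0
    have hup : ‖α * (w:ℂ) + β‖ ≤ (‖α‖ + ‖β‖) * w := by
      refine (norm_add_le _ _).trans ?_
      rw [norm_mul, hnw]
      nlinarith [norm_nonneg α, norm_nonneg β]
    rw [hsub, norm_div, hnd]
    calc ‖α * (w:ℂ) + β‖ / ‖((x:ℂ)+(a-z)+j)*((x:ℂ)+(b-z)+j)*((x:ℂ)+(c+z)+j)*((x:ℂ)+(d+z)+j)‖
        ≤ ((‖α‖ + ‖β‖) * w) / ((w/2)^4) := by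
          apply div_le_div₀ (by positivity) hup hd4 hdlow
      _ = 16 * (‖α‖ + ‖β‖) * (1 / w^3) := by
          rw [mul_one_div, div_eq_div_iff (by positivity) (by positivity)]
          ring
      _ = Cq a b c d z * (1 / w^3) := by rw [Cq, hα, hβ]
  -- partial product bound
  have hCx : Cq a b c d z * (2/x^2) ≤ Cq a b c d z := by
    have h2x : 2/x^2 ≤ 1 := by rw [div_le_one (by positivity)]; nlinarith
    exact mul_le_of_le_one_right (Cq_nonneg a b c d z) h2x
  have hprod : ∀ n : ℕ, ‖(∏ j ∈ Finset.range (n+1), P j) - 1‖ ≤ Kq a b c d z / x^2 := by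
    intro n
    refine (norm_prod_sub_one_le _ _).trans ?_
    have hS1 : ∑ j ∈ Finset.range (n+1), ‖P j - 1‖ ≤ Cq a b c d z * (2/x^2) := by
      calc ∑ j ∈ Finset.range (n+1), ‖P j - 1‖
          ≤ ∑ j ∈ Finset.range (n+1), Cq a b c d z * (1/(x+(j:ℝ))^3) :=
            Finset.sum_le_sum (fun j _ => hPb j)
        _ = Cq a b c d z * ∑ j ∈ Finset.range (n+1), 1/(x+(j:ℝ))^3 := by
            rw [Finset.mul_sum]
        _ ≤ Cq a b c d z * (2/x^2) := by
            exact mul_le_mul_of_nonneg_left (telescope_sum_le x hx2 (n+1)) (Cq_nonneg a b c d z)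
    have hS0 : 0 ≤ ∑ j ∈ Finset.range (n+1), ‖P j - 1‖ :=
      Finset.sum_nonneg (fun j _ => norm_nonneg _)
    calc Real.exp (∑ j ∈ Finset.range (n+1), ‖P j - 1‖) - 1
        ≤ (∑ j ∈ Finset.range (n+1), ‖P j - 1‖) *
            Real.exp (∑ j ∈ Finset.range (n+1), ‖P j - 1‖) := exp_sub_one_le_mul_exp hS0
      _ ≤ (Cq a b c d z * (2/x^2)) * Real.exp (Cq a b c d z) := by
          apply mul_le_mul hS1 (Real.exp_le_exp.mpr (hS1.trans hCx)) (Real.exp_pos _).le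
            (mul_nonneg (Cq_nonneg a b c d z) (by positivity))
      _ = Kq a b c d z / x^2 := by rw [Kq]; ring
  -- the GammaSeq identity
  have hid : ∀ n : ℕ, 1 ≤ n →
      (Complex.GammaSeq ((x:ℂ)+(a-z)) n * Complex.GammaSeq ((x:ℂ)+(b-z)) n *
       Complex.GammaSeq ((x:ℂ)+(c+z)) n * Complex.GammaSeq ((x:ℂ)+(d+z)) n) /
      (Complex.GammaSeq ((x:ℂ)+(c-z)) n * Complex.GammaSeq ((x:ℂ)+(d-z)) n *
       Complex.GammaSeq ((x:ℂ)+(a+z)) n * Complex.GammaSeq ((x:ℂ)+(b+z)) n)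
      = ∏ j ∈ Finset.range (n+1), P j := by
    intro n hn
    have hn0 : (n:ℂ) ≠ 0 := Nat.cast_ne_zero.mpr (by omega)
    have hF : (n.factorial:ℂ) ≠ 0 := Nat.cast_ne_zero.mpr n.factorial_ne_zero
    have hcne : ∀ s : ℂ, (n:ℂ)^s ≠ 0 := by
      intro s; rw [Complex.cpow_def_of_ne_zero hn0]; exact Complex.exp_ne_zero _
    have hQ : ∀ u : ℂ, ‖u‖ ≤ M → (∏ j ∈ Finset.range (n+1), ((x:ℂ) + u + j)) ≠ 0 := by
      intro u hu
      exact Finset.prod_ne_zero_iff.mpr (fun j _ => hne u hu j)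
    have hE : (n:ℂ)^((x:ℂ)+(a-z)) * (n:ℂ)^((x:ℂ)+(b-z)) * (n:ℂ)^((x:ℂ)+(c+z)) *
        (n:ℂ)^((x:ℂ)+(d+z)) = (n:ℂ)^((x:ℂ)+(c-z)) * (n:ℂ)^((x:ℂ)+(d-z)) *
        (n:ℂ)^((x:ℂ)+(a+z)) * (n:ℂ)^((x:ℂ)+(b+z)) := by
      rw [← Complex.cpow_add _ _ hn0, ← Complex.cpow_add _ _ hn0, ← Complex.cpow_add _ _ hn0,
        ← Complex.cpow_add _ _ hn0, ← Complex.cpow_add _ _ hn0, ← Complex.cpow_add _ _ hn0]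
      congr 1; ring
    simp only [Complex.GammaSeq, hP]
    rw [Finset.prod_div_distrib]
    simp only [Finset.prod_mul_distrib]
    calc ((n:ℂ)^((x:ℂ)+(a-z)) * (n.factorial:ℂ) / (∏ j ∈ Finset.range (n+1), ((x:ℂ)+(a-z) + j)) *
          ((n:ℂ)^((x:ℂ)+(b-z)) * (n.factorial:ℂ) / (∏ j ∈ Finset.range (n+1), ((x:ℂ)+(b-z) + j))) *
          ((n:ℂ)^((x:ℂ)+(c+z)) * (n.factorial:ℂ) / (∏ j ∈ Finset.range (n+1), ((x:ℂ)+(c+z) + j))) *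
          ((n:ℂ)^((x:ℂ)+(d+z)) * (n.factorial:ℂ) / (∏ j ∈ Finset.range (n+1), ((x:ℂ)+(d+z) + j)))) /
         ((n:ℂ)^((x:ℂ)+(c-z)) * (n.factorial:ℂ) / (∏ j ∈ Finset.range (n+1), ((x:ℂ)+(c-z) + j)) *
          ((n:ℂ)^((x:ℂ)+(d-z)) * (n.factorial:ℂ) / (∏ j ∈ Finset.range (n+1), ((x:ℂ)+(d-z) + j))) *
          ((n:ℂ)^((x:ℂ)+(a+z)) * (n.factorial:ℂ) / (∏ j ∈ Finset.range (n+1), ((x:ℂ)+(a+z) + j))) *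
          ((n:ℂ)^((x:ℂ)+(b+z)) * (n.factorial:ℂ) / (∏ j ∈ Finset.range (n+1), ((x:ℂ)+(b+z) + j))))
        = ((n:ℂ)^((x:ℂ)+(a-z)) * (n:ℂ)^((x:ℂ)+(b-z)) * (n:ℂ)^((x:ℂ)+(c+z)) * (n:ℂ)^((x:ℂ)+(d+z)))
          * (((n.factorial:ℂ)*(n.factorial:ℂ)*(n.factorial:ℂ)*(n.factorial:ℂ)) *
             ((∏ j ∈ Finset.range (n+1), ((x:ℂ)+(c-z) + j)) *
              (∏ j ∈ Finset.range (n+1), ((x:ℂ)+(d-z) + j)) *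
              (∏ j ∈ Finset.range (n+1), ((x:ℂ)+(a+z) + j)) *
              (∏ j ∈ Finset.range (n+1), ((x:ℂ)+(b+z) + j)))) /
          (((n:ℂ)^((x:ℂ)+(c-z)) * (n:ℂ)^((x:ℂ)+(d-z)) * (n:ℂ)^((x:ℂ)+(a+z)) * (n:ℂ)^((x:ℂ)+(b+z)))
          * (((n.factorial:ℂ)*(n.factorial:ℂ)*(n.factorial:ℂ)*(n.factorial:ℂ)) *
             ((∏ j ∈ Finset.range (n+1), ((x:ℂ)+(a-z) + j)) *
              (∏ j ∈ Finset.range (n+1), ((x:ℂ)+(b-z) + j)) *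
              (∏ j ∈ Finset.range (n+1), ((x:ℂ)+(c+z) + j)) *
              (∏ j ∈ Finset.range (n+1), ((x:ℂ)+(d+z) + j))))) := by
          field_simp [hcne, hF, hQ _ h1, hQ _ h2, hQ _ h3, hQ _ h4, hQ _ h5, hQ _ h6,
            hQ _ h7, hQ _ h8]
      _ = ((∏ j ∈ Finset.range (n+1), ((x:ℂ)+(c-z) + j)) *
           (∏ j ∈ Finset.range (n+1), ((x:ℂ)+(d-z) + j)) *
           (∏ j ∈ Finset.range (n+1), ((x:ℂ)+(a+z) + j)) *
           (∏ j ∈ Finset.range (n+1), ((x:ℂ)+(b+z) + j))) /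
          ((∏ j ∈ Finset.range (n+1), ((x:ℂ)+(a-z) + j)) *
           (∏ j ∈ Finset.range (n+1), ((x:ℂ)+(b-z) + j)) *
           (∏ j ∈ Finset.range (n+1), ((x:ℂ)+(c+z) + j)) *
           (∏ j ∈ Finset.range (n+1), ((x:ℂ)+(d+z) + j))) := by
          rw [hE, mul_div_mul_left _ _ (mul_ne_zero (mul_ne_zero (mul_ne_zero (hcne _)
            (hcne _)) (hcne _)) (hcne _)), mul_div_mul_left _ _
            (mul_ne_zero (mul_ne_zero (mul_ne_zero hF hF) hF) hF)]
  -- conclusion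
  have g : ∀ u : ℂ, ‖u‖ ≤ M → Complex.Gamma ((x:ℂ)+u) ≠ 0 := by
    intro u hu
    apply Complex.Gamma_ne_zero_of_re_pos
    simpa using hre u hu 0
  have hGden_ne : Complex.Gamma ((x:ℂ)+(c-z)) * Complex.Gamma ((x:ℂ)+(d-z)) *
      Complex.Gamma ((x:ℂ)+(a+z)) * Complex.Gamma ((x:ℂ)+(b+z)) ≠ 0 :=
    mul_ne_zero (mul_ne_zero (mul_ne_zero (g _ h3) (g _ h4)) (g _ h5)) (g _ h6)
  have hT : Tendsto (fun n =>
      (Complex.GammaSeq ((x:ℂ)+(a-z)) n * Complex.GammaSeq ((x:ℂ)+(b-z)) n *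
       Complex.GammaSeq ((x:ℂ)+(c+z)) n * Complex.GammaSeq ((x:ℂ)+(d+z)) n) /
      (Complex.GammaSeq ((x:ℂ)+(c-z)) n * Complex.GammaSeq ((x:ℂ)+(d-z)) n *
       Complex.GammaSeq ((x:ℂ)+(a+z)) n * Complex.GammaSeq ((x:ℂ)+(b+z)) n)) atTop
      (𝓝 ((Complex.Gamma ((x:ℂ)+(a-z)) * Complex.Gamma ((x:ℂ)+(b-z)) *
      Complex.Gamma ((x:ℂ)+(c+z)) * Complex.Gamma ((x:ℂ)+(d+z))) /
     (Complex.Gamma ((x:ℂ)+(c-z)) * Complex.Gamma ((x:ℂ)+(d-z)) *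
      Complex.Gamma ((x:ℂ)+(a+z)) * Complex.Gamma ((x:ℂ)+(b+z))))) :=
    Tendsto.div
      ((((Complex.GammaSeq_tendsto_Gamma _).mul (Complex.GammaSeq_tendsto_Gamma _)).mul
        (Complex.GammaSeq_tendsto_Gamma _)).mul (Complex.GammaSeq_tendsto_Gamma _))
      ((((Complex.GammaSeq_tendsto_Gamma _).mul (Complex.GammaSeq_tendsto_Gamma _)).mul
        (Complex.GammaSeq_tendsto_Gamma _)).mul (Complex.GammaSeq_tendsto_Gamma _)) hGden_ne
  have hT2 : Tendsto (fun n => ∏ j ∈ Finset.range (n+1), P j) atTop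
      (𝓝 ((Complex.Gamma ((x:ℂ)+(a-z)) * Complex.Gamma ((x:ℂ)+(b-z)) *
      Complex.Gamma ((x:ℂ)+(c+z)) * Complex.Gamma ((x:ℂ)+(d+z))) /
     (Complex.Gamma ((x:ℂ)+(c-z)) * Complex.Gamma ((x:ℂ)+(d-z)) *
      Complex.Gamma ((x:ℂ)+(a+z)) * Complex.Gamma ((x:ℂ)+(b+z))))) := by
    apply hT.congr'
    filter_upwards [eventually_ge_atTop 1] with n hn
    exact hid n hn
  have hT3 := (hT2.sub (tendsto_const_nhds (x := (1:ℂ)))).norm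
  exact le_of_tendsto hT3 (Eventually.of_forall hprod)


/-- If `k > 0`, `a + b = c + d`, and none of the arguments of the Gamma functions
involved is a nonpositive integer, then the infinite product over `l = 1, 2, 3, …` of
`Γ(kl+a−z)Γ(kl+b−z)Γ(kl+c+z)Γ(kl+d+z) / (Γ(kl+c−z)Γ(kl+d−z)Γ(kl+a+z)Γ(kl+b+z))`
converges (the family of factors is multipliable) to a nonzero complex number. -/
theorem stmt0 (k : ℝ) (hk : 0 < k) (a b c d z : ℂ) (habcd : a + b = c + d)
    (hreg : ∀ l : ℕ, 1 ≤ l → ∀ m : ℕ,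
      ((k : ℂ) * l + a - z ≠ -(m : ℂ)) ∧ ((k : ℂ) * l + b - z ≠ -(m : ℂ)) ∧
      ((k : ℂ) * l + c - z ≠ -(m : ℂ)) ∧ ((k : ℂ) * l + d - z ≠ -(m : ℂ)) ∧
      ((k : ℂ) * l + a + z ≠ -(m : ℂ)) ∧ ((k : ℂ) * l + b + z ≠ -(m : ℂ)) ∧
      ((k : ℂ) * l + c + z ≠ -(m : ℂ)) ∧ ((k : ℂ) * l + d + z ≠ -(m : ℂ))) :
    Multipliable (fun l : ℕ => gammaFactor k a b c d z (l + 1)) ∧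
    (∏' l : ℕ, gammaFactor k a b c d z (l + 1)) ≠ 0 := by
  have hM0 : (0:ℝ) ≤ ‖a‖+‖b‖+‖c‖+‖d‖+‖z‖ := by positivity
  set M : ℝ := ‖a‖+‖b‖+‖c‖+‖d‖+‖z‖ with hMdef
  have hb1 : ‖a-z‖ ≤ M := by
    have := norm_sub_le a z
    have nb := norm_nonneg b; have nc := norm_nonneg c; have nd := norm_nonneg d
    simp only [hMdef]; linarith
  have hb2 : ‖b-z‖ ≤ M := by
    have := norm_sub_le b z
    have na := norm_nonneg a; have nc := norm_nonneg c; have nd := norm_nonneg d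
    simp only [hMdef]; linarith
  have hb3 : ‖c-z‖ ≤ M := by
    have := norm_sub_le c z
    have na := norm_nonneg a; have nb := norm_nonneg b; have nd := norm_nonneg d
    simp only [hMdef]; linarith
  have hb4 : ‖d-z‖ ≤ M := by
    have := norm_sub_le d z
    have na := norm_nonneg a; have nb := norm_nonneg b; have nc := norm_nonneg c
    simp only [hMdef]; linarith
  have hb5 : ‖a+z‖ ≤ M := by
    have := norm_add_le a z
    have nb := norm_nonneg b; have nc := norm_nonneg c; have nd := norm_nonneg d
    simp only [hMdef]; linarith
  have hb6 : ‖b+z‖ ≤ M := by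
    have := norm_add_le b z
    have na := norm_nonneg a; have nc := norm_nonneg c; have nd := norm_nonneg d
    simp only [hMdef]; linarith
  have hb7 : ‖c+z‖ ≤ M := by
    have := norm_add_le c z
    have na := norm_nonneg a; have nb := norm_nonneg b; have nd := norm_nonneg d
    simp only [hMdef]; linarith
  have hb8 : ‖d+z‖ ≤ M := by
    have := norm_add_le d z
    have na := norm_nonneg a; have nb := norm_nonneg b; have nc := norm_nonneg c
    simp only [hMdef]; linarith
  -- rewrite gammaFactor in the shape of gamma_ratio_bound
  have hgf : ∀ l : ℕ, gammaFactor k a b c d z l =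
      (Complex.Gamma (((k*(l:ℝ):ℝ):ℂ)+(a-z)) * Complex.Gamma (((k*(l:ℝ):ℝ):ℂ)+(b-z)) *
       Complex.Gamma (((k*(l:ℝ):ℝ):ℂ)+(c+z)) * Complex.Gamma (((k*(l:ℝ):ℝ):ℂ)+(d+z))) /
      (Complex.Gamma (((k*(l:ℝ):ℝ):ℂ)+(c-z)) * Complex.Gamma (((k*(l:ℝ):ℝ):ℂ)+(d-z)) *
       Complex.Gamma (((k*(l:ℝ):ℝ):ℂ)+(a+z)) * Complex.Gamma (((k*(l:ℝ):ℝ):ℂ)+(b+z))) := by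
    intro l
    have e : ∀ u v : ℂ, ((k*(l:ℝ):ℝ):ℂ) + (u - v) = (k:ℂ)*(l:ℕ) + u - v := by
      intros; push_cast; ring
    have e2 : ∀ u v : ℂ, ((k*(l:ℝ):ℝ):ℂ) + (u + v) = (k:ℂ)*(l:ℕ) + u + v := by
      intros; push_cast; ring
    unfold gammaFactor
    rw [e a z, e b z, e c z, e d z, e2 c z, e2 d z, e2 a z, e2 b z]
  -- gammaFactor is nonzero
  have gnz : ∀ l : ℕ, gammaFactor k a b c d z (l+1) ≠ 0 := by
    intro l
    have hr := hreg (l+1) (by omega)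
    unfold gammaFactor
    apply div_ne_zero
    · exact mul_ne_zero (mul_ne_zero (mul_ne_zero
        (Complex.Gamma_ne_zero fun m => (hr m).1)
        (Complex.Gamma_ne_zero fun m => (hr m).2.1))
        (Complex.Gamma_ne_zero fun m => (hr m).2.2.2.2.2.2.1))
        (Complex.Gamma_ne_zero fun m => (hr m).2.2.2.2.2.2.2)
    · exact mul_ne_zero (mul_ne_zero (mul_ne_zero
        (Complex.Gamma_ne_zero fun m => (hr m).2.2.1)
        (Complex.Gamma_ne_zero fun m => (hr m).2.2.2.1))
        (Complex.Gamma_ne_zero fun m => (hr m).2.2.2.2.1))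
        (Complex.Gamma_ne_zero fun m => (hr m).2.2.2.2.2.1)
  -- the quantitative bound, for large l
  set L : ℕ := Nat.ceil ((2*M+2)/k) with hL
  have hbound : ∀ l : ℕ, L ≤ l →
      ‖gammaFactor k a b c d z (l+1) - 1‖ ≤ (Kq a b c d z / k^2) * (1/((l:ℝ)+1)^2) := by
    intro l hl
    have h1 : ((2*M+2)/k) ≤ (L:ℝ) := Nat.le_ceil _
    have h2 : (L:ℝ) ≤ (l:ℝ) := Nat.cast_le.mpr hl
    have h3 : (2*M+2)/k ≤ (l:ℝ)+1 := by linarith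
    have hx : 2*M+2 ≤ k*(((l+1:ℕ)):ℝ) := by
      rw [div_le_iff₀ hk] at h3
      push_cast
      nlinarith
    have hkl1 : (0:ℝ) < k*(((l+1:ℕ)):ℝ) := by positivity
    have hb := gamma_ratio_bound a b c d z habcd M hb1 hb2 hb3 hb4 hb5 hb6 hb7 hb8 hM0
      (k*(((l+1:ℕ)):ℝ)) hx
    rw [hgf (l+1)]
    refine hb.trans (le_of_eq ?_)
    have h4 : (Kq a b c d z / k^2) * (1/((l:ℝ)+1)^2) = Kq a b c d z / (k^2*((l:ℝ)+1)^2) := by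
      rw [div_mul_div_comm, mul_one]
    have h5 : (k * ((l+1:ℕ):ℝ))^2 = k^2*((l:ℝ)+1)^2 := by push_cast; ring
    rw [h4, h5]
  -- summability of the logs
  have hsum2 : Summable (fun l : ℕ => 1/((l:ℝ)+1)^2) := by
    have h := Real.summable_one_div_nat_pow.mpr (one_lt_two (α := ℕ))
    have h2 := (summable_nat_add_iff 1).mpr h
    apply h2.congr
    intro n
    push_cast
    ring
  have hmaj : Summable (fun l : ℕ => (3/2) * ((Kq a b c d z / k^2) * (1/((l:ℝ)+1)^2))) :=
    (hsum2.mul_left _).mul_left _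
  have hlin : Tendsto (fun l : ℕ => (Kq a b c d z / k^2) * (1/((l:ℝ)+1))) atTop (𝓝 0) := by
    have := tendsto_one_div_add_atTop_nhds_zero_nat (𝕜 := ℝ)
    simpa using this.const_mul (Kq a b c d z / k^2)
  have hKnn : 0 ≤ Kq a b c d z := by
    rw [Kq]
    have := Cq_nonneg a b c d z
    positivity
  have hsq_le : ∀ l : ℕ, (Kq a b c d z / k^2) * (1/((l:ℝ)+1)^2)
      ≤ (Kq a b c d z / k^2) * (1/((l:ℝ)+1)) := by
    intro l
    apply mul_le_mul_of_nonneg_left _ (by positivity)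
    have h1 : (1:ℝ) ≤ (l:ℝ)+1 := by
      have := Nat.cast_nonneg (α := ℝ) l; linarith
    rw [div_le_div_iff₀ (by positivity) (by positivity)]
    nlinarith
  have hsmall : ∀ᶠ l : ℕ in atTop, (Kq a b c d z / k^2) * (1/((l:ℝ)+1)^2) ≤ 1/2 := by
    have hev := hlin.eventually_lt_const (show (0:ℝ) < 1/2 by norm_num)
    filter_upwards [hev] with l h
    exact (hsq_le l).trans h.le
  have hlog : Summable (fun l : ℕ => Complex.log (gammaFactor k a b c d z (l+1))) := by
    apply Summable.of_norm_bounded_eventually_nat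
      (g := fun l : ℕ => (3/2) * ((Kq a b c d z / k^2) * (1/((l:ℝ)+1)^2))) hmaj
    filter_upwards [hsmall, eventually_ge_atTop L] with l hs hl
    have hb := hbound l hl
    have hw : ‖gammaFactor k a b c d z (l+1) - 1‖ ≤ 1/2 := hb.trans hs
    have h1 : gammaFactor k a b c d z (l+1) = 1 + (gammaFactor k a b c d z (l+1) - 1) := by
      ring
    rw [h1]
    refine (Complex.norm_log_one_add_half_le_self hw).trans ?_
    exact mul_le_mul_of_nonneg_left hb (by norm_num)
  -- conclude
  have hfn : ∀ (u : Unit) (l : ℕ), (fun (l : ℕ) (_ : Unit) =>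
      gammaFactor k a b c d z (l+1)) l u ≠ 0 := fun _ l => gnz l
  have hfs : ∀ (u : Unit), Summable fun l : ℕ =>
      Complex.log ((fun (l : ℕ) (_ : Unit) => gammaFactor k a b c d z (l+1)) l u) :=
    fun _ => hlog
  constructor
  · exact Complex.multipliable_of_summable_log hlog
  · have heq := Complex.cexp_tsum_eq_tprod gnz hlog
    rw [← heq]
    exact Complex.exp_ne_zero _
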